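/- (Bundle demand, Case 2) Let q1, q2 > 0 and let (θ1, θ2) be uniformly distributed on the unit square [0, 1]². Then for every bundle subscription fee p with q2 ≤ p ≤ q1, the probability that θ1·q1 + θ2·q2 ≥ p equals (1/2)·((1 − p/q1) + (1 − (p − q2)/q1)) = 1 − p/q1 + q2/(2·q1). -/

import Mathlib

open Real Set MeasureTheory

/-- Bundle demand, Case 2: Let `q1, q2 > 0` and let `(θ1, θ2)` be
uniformly distributed on `[0, 1]²`. For every bundle fee `p` with `q2 ≤ p ≤ q1`,
the probability that `θ1 * q1 + θ2 * q2 ≥ p` equals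
`(1/2) * ((1 - p / q1) + (1 - (p - q2) / q1)) = 1 - p / q1 + q2 / (2 * q1)`. -/
theorem bundle_demand_case2 (q1 q2 p : ℝ) (hq1 : 0 < q1) (hq2 : 0 < q2)
    (hp2 : q2 ≤ p) (hp1 : p ≤ q1) :
    MeasureTheory.volume
        {θ : ℝ × ℝ | θ.1 ∈ Set.Icc (0 : ℝ) 1 ∧ θ.2 ∈ Set.Icc (0 : ℝ) 1 ∧
          p ≤ θ.1 * q1 + θ.2 * q2}
      = ENNReal.ofReal ((1 / 2) * ((1 - p / q1) + (1 - (p - q2) / q1))) ∧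
    (1 / 2 : ℝ) * ((1 - p / q1) + (1 - (p - q2) / q1)) = 1 - p / q1 + q2 / (2 * q1) := by
  have hkey : (1 / 2 : ℝ) * ((1 - p / q1) + (1 - (p - q2) / q1))
      = 1 - p / q1 + q2 / (2 * q1) := by
    field_simp
    ring
  refine ⟨?_, hkey⟩
  set f : ℝ → ℝ := fun t => (p - t * q2) / q1 with hf
  have hfcont : Continuous f := by
    apply Continuous.div_const
    continuity
  set T : Set (ℝ × ℝ) := {θ : ℝ × ℝ | θ.1 ∈ Icc (0 : ℝ) 1 ∧ θ.2 ∈ Icc (f θ.1) 1}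
    with hT
  have hTmeas : MeasurableSet T := by
    have h1 : MeasurableSet {θ : ℝ × ℝ | θ.1 ∈ Icc (0 : ℝ) 1} :=
      measurable_fst measurableSet_Icc
    have h2 : MeasurableSet {θ : ℝ × ℝ | f θ.1 ≤ θ.2} :=
      measurableSet_le (hfcont.measurable.comp measurable_fst) measurable_snd
    have h3 : MeasurableSet {θ : ℝ × ℝ | θ.2 ≤ 1} :=
      measurableSet_le measurable_snd measurable_const
    have : T = {θ : ℝ × ℝ | θ.1 ∈ Icc (0 : ℝ) 1} ∩
        ({θ : ℝ × ℝ | f θ.1 ≤ θ.2} ∩ {θ : ℝ × ℝ | θ.2 ≤ 1}) := by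
      ext θ; simp [hT, mem_Icc, and_assoc]
    rw [this]
    exact h1.inter (h2.inter h3)
  have hseq : {θ : ℝ × ℝ | θ.1 ∈ Icc (0 : ℝ) 1 ∧ θ.2 ∈ Icc (0 : ℝ) 1 ∧
      p ≤ θ.1 * q1 + θ.2 * q2} = Prod.swap ⁻¹' T := by
    ext ⟨x, y⟩
    simp only [hT, mem_setOf_eq, mem_preimage, Prod.swap, mem_Icc, hf]
    constructor
    · rintro ⟨⟨hx0, hx1⟩, ⟨hy0, hy1⟩, hpl⟩
      refine ⟨⟨hy0, hy1⟩, ?_, hx1⟩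
      rw [div_le_iff₀ hq1]; linarith
    · rintro ⟨⟨hy0, hy1⟩, hfx, hx1⟩
      have h0 : (0 : ℝ) ≤ (p - y * q2) / q1 := by
        apply div_nonneg _ hq1.le; nlinarith
      have h1 := (div_le_iff₀ hq1).mp hfx
      exact ⟨⟨le_trans h0 hfx, hx1⟩, ⟨hy0, hy1⟩, by linarith⟩
  rw [hseq, Measure.volume_eq_prod,
    Measure.measurePreserving_swap.measure_preimage hTmeas.nullMeasurableSet,
    Measure.prod_apply hTmeas]
  have hslice : ∀ x : ℝ, volume (Prod.mk x ⁻¹' T)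
      = (Icc (0 : ℝ) 1).indicator (fun x => ENNReal.ofReal (1 - f x)) x := by
    intro x
    by_cases hx : x ∈ Icc (0 : ℝ) 1
    · have : Prod.mk x ⁻¹' T = Icc (f x) 1 := by
        ext y
        simp [hT, hx]
        exact fun _ _ => ⟨hx.1, hx.2⟩
      rw [this, Real.volume_Icc, indicator_of_mem hx]
    · have : Prod.mk x ⁻¹' T = ∅ := by
        ext y
        simp [hT, hx]
        exact fun h0 h1 _ => (hx ⟨h0, h1⟩).elim
      rw [this, indicator_of_notMem hx]; simp
  simp_rw [hslice]
  rw [lintegral_indicator measurableSet_Icc]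
  have hint : IntegrableOn (fun x => 1 - f x) (Icc (0 : ℝ) 1) volume :=
    (continuous_const.sub hfcont).integrableOn_Icc
  rw [← ofReal_integral_eq_lintegral_ofReal hint]
  · have hval : ∫ x in Icc (0 : ℝ) 1, (1 - f x)
        = (1 / 2 : ℝ) * ((1 - p / q1) + (1 - (p - q2) / q1)) := by
      have heq : ∀ x : ℝ, 1 - f x = (1 - p / q1) + (q2 / q1) * x := by
        intro x; simp only [hf]; field_simp; ring
      simp_rw [heq]
      rw [MeasureTheory.integral_Icc_eq_integral_Ioc,
        ← intervalIntegral.integral_of_le zero_le_one]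
      rw [intervalIntegral.integral_add (g := fun x : ℝ => q2 / q1 * x) (intervalIntegrable_const)
        ((continuous_const.mul continuous_id').intervalIntegrable _ _ :
          IntervalIntegrable (fun x : ℝ => q2 / q1 * x) volume 0 1)]
      rw [intervalIntegral.integral_const, intervalIntegral.integral_const_mul,
        integral_id]
      field_simp
      ring_nf; field_simp; ring
    rw [hval]
  · filter_upwards [ae_restrict_mem measurableSet_Icc] with x hx
    have hx1 : x ≤ 1 := hx.2
    have hx0 : 0 ≤ x := hx.1
    simp only [hf, Pi.zero_apply]
    have : (p - x * q2) / q1 ≤ 1 := by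
      rw [div_le_one hq1]; nlinarith
    linarith
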